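/- arXiv:1205.1544 — 2 statements merged into one kernel-verified Lean document; each statement's English description precedes it below -/
import Mathlib

section
/- Let ρ > 0, N ≥ 2, K ∈ ℕ, and suppose E : [3, ∞) → [0,∞) satisfies E(k) = ∫_{|y| < 2^k ρ} |w(y)|² dy for an L² function w. If |K(z)| ≤ C₀|z|^{-N} and p₂(x) = ∫_{|y| ≥ 2ρ} K(x−y)|w(y)|² dy, then for all |x| ≤ ρ: |p₂(x)| ≤ C ρ^{-N} [ Σ_{k=3}^{K} 2^{-Nk} E(k) + 2^{-NK} ‖w‖_{L²}² ], where C depends only on N and C₀. (Dyadic decomposition of the nonlocal pressure.) -/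
open MeasureTheory Set ENNReal

lemma lintegral_finset_biUnion_le' {α β : Type*} [MeasurableSpace α] (μ : Measure α)
    (s : Finset β) (t : β → Set α) (f : α → ℝ≥0∞) :
    ∫⁻ x in ⋃ b ∈ s, t b, f x ∂μ ≤ ∑ b ∈ s, ∫⁻ x in t b, f x ∂μ := by
  classical
  induction s using Finset.induction_on with
  | empty => simp
  | insert _ _ h ih =>
    rename_i a s
    rw [Finset.set_biUnion_insert, Finset.sum_insert h]
    exact (lintegral_union_le _ _ _).trans (add_le_add_right ih _)

lemma cover_aux (K : ℕ) (hK : 3 ≤ K) (t : ℝ) (h2 : 2 ≤ t) (hKt : t < 2 ^ K) :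
    ∃ k, 3 ≤ k ∧ k ≤ K ∧ (2:ℝ) ^ k / 4 ≤ t ∧ t < 2 ^ k := by
  induction K, hK using Nat.le_induction with
  | base =>
    refine ⟨3, le_refl 3, le_refl 3, by norm_num; linarith, by norm_num at hKt ⊢; linarith⟩
  | succ K hK ih =>
    by_cases h : t < 2 ^ K
    · obtain ⟨k, h1, h2', h3, h4⟩ := ih h
      exact ⟨k, h1, h2'.trans (Nat.le_succ K), h3, h4⟩
    · push_neg at h
      refine ⟨K + 1, by omega, le_refl _, ?_, hKt⟩
      have hp : (0:ℝ) < 2 ^ K := by positivity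
      have : (2:ℝ) ^ (K + 1) / 4 ≤ 2 ^ K := by rw [pow_succ]; nlinarith
      linarith

lemma rpow_shell_val (k : ℕ) (ρ : ℝ) (hρ : 0 < ρ) (N : ℕ) :
    ((2:ℝ) ^ k * ρ / 8) ^ (-(N:ℝ)) = 8 ^ N * ρ ^ (-(N:ℝ)) * 2 ^ (-(N:ℝ) * k) := by
  rw [show (2:ℝ) ^ k * ρ / 8 = 2 ^ k * ρ * (8:ℝ)⁻¹ by ring]
  rw [Real.mul_rpow (by positivity) (by positivity), Real.mul_rpow (by positivity) (by positivity)]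
  rw [← Real.rpow_natCast (2:ℝ) k, ← Real.rpow_mul (by norm_num)]
  rw [Real.inv_rpow (by norm_num), ← Real.rpow_neg (by norm_num), neg_neg,
    Real.rpow_natCast]
  ring_nf

/-- Dyadic decomposition of the nonlocal pressure: for `|x| ≤ ρ`,
`|p₂(x)| ≤ C ρ^{-N} (Σ_{k=3}^{K} 2^{-Nk} E(k) + 2^{-NK} ‖w‖_{L²}²)`, where
`E(k) = ∫_{|y| < 2^k ρ} |w|²` and `C = C(N, C₀)`. -/
theorem dyadic_pressure_bound (N : ℕ) (hN : 2 ≤ N) :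
    ∀ C₀ > (0:ℝ), ∃ C > (0:ℝ), ∀ (ρ : ℝ), 0 < ρ → ∀ (K : ℕ), 3 ≤ K →
      ∀ (Kf : EuclideanSpace ℝ (Fin N) → ℝ),
        (∀ z : EuclideanSpace ℝ (Fin N), z ≠ 0 → |Kf z| ≤ C₀ * ‖z‖ ^ (-(N:ℝ))) →
      ∀ (w : EuclideanSpace ℝ (Fin N) → EuclideanSpace ℝ (Fin N)), MemLp w 2 volume →
      ∀ x : EuclideanSpace ℝ (Fin N), ‖x‖ ≤ ρ →
        |∫ y in {y : EuclideanSpace ℝ (Fin N) | 2 * ρ ≤ ‖y‖}, Kf (x - y) * ‖w y‖ ^ 2| ≤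
          C * ρ ^ (-(N:ℝ)) *
            ((∑ k ∈ Finset.Icc 3 K, (2:ℝ) ^ (-(N:ℝ) * k) *
                ∫ y in {y : EuclideanSpace ℝ (Fin N) | ‖y‖ < 2 ^ k * ρ}, ‖w y‖ ^ 2) +
              (2:ℝ) ^ (-(N:ℝ) * K) * ∫ y, ‖w y‖ ^ 2) := by
  intro C₀ hC₀
  refine ⟨C₀ * 8 ^ N, by positivity, ?_⟩
  intro ρ hρ K hK Kf hKf w hw x hx
  have hw2 : Integrable (fun y => ‖w y‖ ^ 2) volume := by
    have := hw.integrable_norm_rpow two_ne_zero ENNReal.ofNat_ne_top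
    simpa [ENNReal.toReal_ofNat, Real.rpow_natCast] using this
  have hEnn : ∀ s : Set (EuclideanSpace ℝ (Fin N)), 0 ≤ ∫ y in s, ‖w y‖ ^ 2 :=
    fun s => integral_nonneg fun y => by positivity
  have hsum_nonneg : 0 ≤ (∑ k ∈ Finset.Icc 3 K, (2:ℝ) ^ (-(N:ℝ) * k) *
        ∫ y in {y : EuclideanSpace ℝ (Fin N) | ‖y‖ < 2 ^ k * ρ}, ‖w y‖ ^ 2) +
        (2:ℝ) ^ (-(N:ℝ) * K) * ∫ y, ‖w y‖ ^ 2 := by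
    apply add_nonneg
    · exact Finset.sum_nonneg fun k _ => mul_nonneg (by positivity) (hEnn _)
    · exact mul_nonneg (by positivity) (integral_nonneg fun y => by positivity)
  have hRHS : 0 ≤ C₀ * 8 ^ N * ρ ^ (-(N:ℝ)) *
      ((∑ k ∈ Finset.Icc 3 K, (2:ℝ) ^ (-(N:ℝ) * k) *
          ∫ y in {y : EuclideanSpace ℝ (Fin N) | ‖y‖ < 2 ^ k * ρ}, ‖w y‖ ^ 2) +
        (2:ℝ) ^ (-(N:ℝ) * K) * ∫ y, ‖w y‖ ^ 2) :=
    mul_nonneg (by positivity) hsum_nonneg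
  set A : Set (EuclideanSpace ℝ (Fin N)) := {y | 2 * ρ ≤ ‖y‖} with hA
  by_cases hint : Integrable (fun y => Kf (x - y) * ‖w y‖ ^ 2) (volume.restrict A)
  swap
  · rw [integral_undef hint, abs_zero]; exact hRHS
  -- shells and tail
  set Sk : ℕ → Set (EuclideanSpace ℝ (Fin N)) :=
    fun k => {y | 2 ^ k * ρ / 4 ≤ ‖y‖ ∧ ‖y‖ < 2 ^ k * ρ} with hSkdef
  set T : Set (EuclideanSpace ℝ (Fin N)) := {y | 2 ^ K * ρ ≤ ‖y‖} with hTdef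
  have hSm : ∀ k, MeasurableSet (Sk k) := fun k =>
    (measurableSet_le measurable_const measurable_norm).inter
      (measurableSet_lt measurable_norm measurable_const)
  have hTm : MeasurableSet T := measurableSet_le measurable_const measurable_norm
  have hcover : A ⊆ (⋃ k ∈ Finset.Icc 3 K, Sk k) ∪ T := by
    intro y hy
    have hy' : 2 * ρ ≤ ‖y‖ := hy
    by_cases hyT : 2 ^ K * ρ ≤ ‖y‖
    · exact Or.inr hyT
    · push_neg at hyT
      obtain ⟨k, h3, hkK, hl, hu⟩ := cover_aux K hK (‖y‖ / ρ)
        (by rw [le_div_iff₀ hρ]; linarith)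
        (by rw [div_lt_iff₀ hρ]; linarith)
      rw [le_div_iff₀ hρ] at hl
      rw [div_lt_iff₀ hρ] at hu
      refine Or.inl (mem_biUnion (Finset.mem_Icc.mpr ⟨h3, hkK⟩) ⟨by linarith, by linarith⟩)
  -- pointwise bound
  have key_pt : ∀ k : ℕ, 3 ≤ k → ∀ y : EuclideanSpace ℝ (Fin N), 2 ^ k * ρ / 4 ≤ ‖y‖ →
      |Kf (x - y) * ‖w y‖ ^ 2| ≤
        (C₀ * 8 ^ N * ρ ^ (-(N:ℝ)) * 2 ^ (-(N:ℝ) * k)) * ‖w y‖ ^ 2 := by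
    intro k hk3 y hy
    have h8 : (8:ℝ) ≤ 2 ^ k := by
      calc (8:ℝ) = 2 ^ 3 := by norm_num
        _ ≤ 2 ^ k := pow_le_pow_right₀ (by norm_num) hk3
    have hxy : 2 ^ k * ρ / 8 ≤ ‖x - y‖ := by
      have h1 : ‖y‖ - ‖x‖ ≤ ‖x - y‖ := by
        have h2 := norm_sub_norm_le y x
        rwa [norm_sub_rev] at h2
      nlinarith
    have hxy0 : (0:ℝ) < ‖x - y‖ := lt_of_lt_of_le (by positivity) hxy
    have hne : x - y ≠ 0 := by
      intro h; rw [h, norm_zero] at hxy0; exact lt_irrefl _ hxy0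
    have hb := hKf (x - y) hne
    have hrp : ‖x - y‖ ^ (-(N:ℝ)) ≤ ((2:ℝ) ^ k * ρ / 8) ^ (-(N:ℝ)) :=
      Real.rpow_le_rpow_of_nonpos (by positivity) hxy (neg_nonpos.mpr (Nat.cast_nonneg N))
    have hval := rpow_shell_val k ρ hρ N
    calc |Kf (x - y) * ‖w y‖ ^ 2| = |Kf (x - y)| * ‖w y‖ ^ 2 := by
          rw [abs_mul, abs_of_nonneg (by positivity : (0:ℝ) ≤ ‖w y‖ ^ 2)]
      _ ≤ (C₀ * ‖x - y‖ ^ (-(N:ℝ))) * ‖w y‖ ^ 2 :=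
          mul_le_mul_of_nonneg_right hb (by positivity)
      _ ≤ (C₀ * 8 ^ N * ρ ^ (-(N:ℝ)) * 2 ^ (-(N:ℝ) * k)) * ‖w y‖ ^ 2 := by
          apply mul_le_mul_of_nonneg_right _ (by positivity)
          calc C₀ * ‖x - y‖ ^ (-(N:ℝ)) ≤ C₀ * ((2:ℝ) ^ k * ρ / 8) ^ (-(N:ℝ)) :=
                mul_le_mul_of_nonneg_left hrp hC₀.le
            _ = C₀ * 8 ^ N * ρ ^ (-(N:ℝ)) * 2 ^ (-(N:ℝ) * k) := by rw [hval]; ring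
  set Q : ℝ := C₀ * 8 ^ N * ρ ^ (-(N:ℝ)) with hQdef
  have hQ0 : 0 ≤ Q := by positivity
  have hwint : ∀ s : Set (EuclideanSpace ℝ (Fin N)),
      ∫⁻ y in s, ENNReal.ofReal (‖w y‖ ^ 2) = ENNReal.ofReal (∫ y in s, ‖w y‖ ^ 2) :=
    fun s => (ofReal_integral_eq_lintegral_ofReal (hw2.restrict (s := s))
      (Filter.Eventually.of_forall fun y => by positivity)).symm
  -- per shell estimate
  have hshell : ∀ k ∈ Finset.Icc 3 K,
      (∫⁻ y in Sk k, ENNReal.ofReal |Kf (x - y) * ‖w y‖ ^ 2|) ≤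
        ENNReal.ofReal (Q * ((2:ℝ) ^ (-(N:ℝ) * k) *
          ∫ y in {y : EuclideanSpace ℝ (Fin N) | ‖y‖ < 2 ^ k * ρ}, ‖w y‖ ^ 2)) := by
    intro k hk
    obtain ⟨hk3, hkK⟩ := Finset.mem_Icc.mp hk
    calc (∫⁻ y in Sk k, ENNReal.ofReal |Kf (x - y) * ‖w y‖ ^ 2|)
        ≤ ∫⁻ y in Sk k, ENNReal.ofReal (Q * 2 ^ (-(N:ℝ) * k)) * ENNReal.ofReal (‖w y‖ ^ 2) := by
          apply setLIntegral_mono' (hSm k)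
          intro y hy
          rw [← ENNReal.ofReal_mul (by positivity)]
          exact ENNReal.ofReal_le_ofReal (key_pt k hk3 y hy.1)
      _ = ENNReal.ofReal (Q * 2 ^ (-(N:ℝ) * k)) * ∫⁻ y in Sk k, ENNReal.ofReal (‖w y‖ ^ 2) :=
          lintegral_const_mul' _ _ ENNReal.ofReal_ne_top
      _ ≤ ENNReal.ofReal (Q * 2 ^ (-(N:ℝ) * k)) *
            ∫⁻ y in {y : EuclideanSpace ℝ (Fin N) | ‖y‖ < 2 ^ k * ρ}, ENNReal.ofReal (‖w y‖ ^ 2) :=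
          mul_le_mul_right (lintegral_mono_set fun y hy => hy.2) _
      _ = ENNReal.ofReal (Q * ((2:ℝ) ^ (-(N:ℝ) * k) *
            ∫ y in {y : EuclideanSpace ℝ (Fin N) | ‖y‖ < 2 ^ k * ρ}, ‖w y‖ ^ 2)) := by
          rw [hwint, ← ENNReal.ofReal_mul (by positivity)]
          congr 1
          ring
  have htail : (∫⁻ y in T, ENNReal.ofReal |Kf (x - y) * ‖w y‖ ^ 2|) ≤
      ENNReal.ofReal (Q * ((2:ℝ) ^ (-(N:ℝ) * K) * ∫ y, ‖w y‖ ^ 2)) := by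
    calc (∫⁻ y in T, ENNReal.ofReal |Kf (x - y) * ‖w y‖ ^ 2|)
        ≤ ∫⁻ y in T, ENNReal.ofReal (Q * 2 ^ (-(N:ℝ) * K)) * ENNReal.ofReal (‖w y‖ ^ 2) := by
          apply setLIntegral_mono' hTm
          intro y hy
          have hy' : 2 ^ K * ρ / 4 ≤ ‖y‖ := by
            have : (0:ℝ) < 2 ^ K * ρ := by positivity
            have hyy : 2 ^ K * ρ ≤ ‖y‖ := hy
            linarith
          rw [← ENNReal.ofReal_mul (by positivity)]
          exact ENNReal.ofReal_le_ofReal (key_pt K hK y hy')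
      _ = ENNReal.ofReal (Q * 2 ^ (-(N:ℝ) * K)) * ∫⁻ y in T, ENNReal.ofReal (‖w y‖ ^ 2) :=
          lintegral_const_mul' _ _ ENNReal.ofReal_ne_top
      _ ≤ ENNReal.ofReal (Q * 2 ^ (-(N:ℝ) * K)) * ∫⁻ y, ENNReal.ofReal (‖w y‖ ^ 2) :=
          mul_le_mul_right (setLIntegral_le_lintegral _ _) _
      _ = ENNReal.ofReal (Q * ((2:ℝ) ^ (-(N:ℝ) * K) * ∫ y, ‖w y‖ ^ 2)) := by
          rw [← Measure.restrict_univ (μ := volume), hwint, ← ENNReal.ofReal_mul (by positivity),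
            setIntegral_univ]
          congr 1
          ring
  have key : (∫⁻ y in A, ENNReal.ofReal |Kf (x - y) * ‖w y‖ ^ 2|) ≤
      ENNReal.ofReal (Q * ((∑ k ∈ Finset.Icc 3 K, (2:ℝ) ^ (-(N:ℝ) * k) *
          ∫ y in {y : EuclideanSpace ℝ (Fin N) | ‖y‖ < 2 ^ k * ρ}, ‖w y‖ ^ 2) +
        (2:ℝ) ^ (-(N:ℝ) * K) * ∫ y, ‖w y‖ ^ 2)) := by
    calc (∫⁻ y in A, ENNReal.ofReal |Kf (x - y) * ‖w y‖ ^ 2|)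
        ≤ ∫⁻ y in (⋃ k ∈ Finset.Icc 3 K, Sk k) ∪ T, ENNReal.ofReal |Kf (x - y) * ‖w y‖ ^ 2| :=
          lintegral_mono_set hcover
      _ ≤ (∫⁻ y in ⋃ k ∈ Finset.Icc 3 K, Sk k, ENNReal.ofReal |Kf (x - y) * ‖w y‖ ^ 2|) +
            ∫⁻ y in T, ENNReal.ofReal |Kf (x - y) * ‖w y‖ ^ 2| := lintegral_union_le _ _ _
      _ ≤ (∑ k ∈ Finset.Icc 3 K, ∫⁻ y in Sk k, ENNReal.ofReal |Kf (x - y) * ‖w y‖ ^ 2|) +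
            ∫⁻ y in T, ENNReal.ofReal |Kf (x - y) * ‖w y‖ ^ 2| :=
          add_le_add_left (lintegral_finset_biUnion_le' _ _ _ _) _
      _ ≤ (∑ k ∈ Finset.Icc 3 K, ENNReal.ofReal (Q * ((2:ℝ) ^ (-(N:ℝ) * k) *
              ∫ y in {y : EuclideanSpace ℝ (Fin N) | ‖y‖ < 2 ^ k * ρ}, ‖w y‖ ^ 2))) +
            ENNReal.ofReal (Q * ((2:ℝ) ^ (-(N:ℝ) * K) * ∫ y, ‖w y‖ ^ 2)) :=
          add_le_add (Finset.sum_le_sum hshell) htail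
      _ = ENNReal.ofReal (Q * ((∑ k ∈ Finset.Icc 3 K, (2:ℝ) ^ (-(N:ℝ) * k) *
              ∫ y in {y : EuclideanSpace ℝ (Fin N) | ‖y‖ < 2 ^ k * ρ}, ‖w y‖ ^ 2) +
            (2:ℝ) ^ (-(N:ℝ) * K) * ∫ y, ‖w y‖ ^ 2)) := by
          rw [← ENNReal.ofReal_sum_of_nonneg
            (fun k _ => mul_nonneg hQ0 (mul_nonneg (by positivity) (hEnn _))),
            ← ENNReal.ofReal_add (Finset.sum_nonneg fun k _ =>
              mul_nonneg hQ0 (mul_nonneg (by positivity) (hEnn _)))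
              (mul_nonneg hQ0 (mul_nonneg (by positivity)
                (integral_nonneg fun y => by positivity)))]
          rw [mul_add, Finset.mul_sum]
  calc |∫ y in A, Kf (x - y) * ‖w y‖ ^ 2|
      ≤ ∫ y in A, |Kf (x - y) * ‖w y‖ ^ 2| := by
        simpa only [Real.norm_eq_abs] using
          norm_integral_le_integral_norm (μ := volume.restrict A)
            (fun y => Kf (x - y) * ‖w y‖ ^ 2)
    _ = (∫⁻ y in A, ENNReal.ofReal |Kf (x - y) * ‖w y‖ ^ 2|).toReal :=
        integral_eq_lintegral_of_nonneg_ae (Filter.Eventually.of_forall fun y => abs_nonneg _)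
          hint.abs.aestronglyMeasurable
    _ ≤ _ := ENNReal.toReal_le_of_le_ofReal hRHS key
end

section
/- Let α₀ ∈ ℝ with α₀ < 2, let r > 1, and let E : [0,T) → [0,∞) be bounded and satisfy: there is a constant C such that for all t < T, E(t) ≤ C ∫_t^T f(τ) G(τ) dτ + C ∫_t^T √(G(τ)) dτ, where f ∈ L^r([0,T)) is nonnegative and G(τ) ≤ C'(T−τ)^{α} for some α > α₀ − δ with δ small. Then E(t) ≤ C''(T−t)^{β} where β = min{1 − 1/r + α₀ − δ, (α₀ − δ + 2)/2}; in particular, if α₀ < 2 then β > α₀ for δ small enough. Consequently, any supremum α₀ of exponents α < 2 for which a bound E(t) ≲ (T−t)^α holds on some ball must satisfy α₀ ≥ 2, i.e., the bootstrap closes. -/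
open MeasureTheory Set

lemma aux_integrableOn (T t p : ℝ) (ht : t < T) (hp : -1 < p) :
    IntegrableOn (fun τ : ℝ => (T - τ) ^ p) (Ioo t T) := by
  have h1 : IntervalIntegrable (fun x : ℝ => x ^ p) volume 0 (T - t) :=
    intervalIntegral.intervalIntegrable_rpow' hp
  have h2 := (h1.comp_sub_left T).symm
  simp only [sub_zero, sub_sub_cancel] at h2
  have := (intervalIntegrable_iff_integrableOn_Ioc_of_le ht.le).mp h2
  exact this.mono_set Ioo_subset_Ioc_self

lemma aux_integral (T t p : ℝ) (ht : t < T) (hp : -1 < p) :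
    ∫ τ in Ioo t T, (T - τ) ^ p = (T - t) ^ (p + 1) / (p + 1) := by
  rw [← integral_Ioc_eq_integral_Ioo, ← intervalIntegral.integral_of_le ht.le]
  rw [show (fun τ : ℝ => (T - τ) ^ p) = fun τ : ℝ => ((fun x : ℝ => x ^ p) (T - τ)) from rfl]
  rw [intervalIntegral.integral_comp_sub_left (fun x : ℝ => x ^ p) T]
  simp only [sub_self, sub_zero]
  rw [integral_rpow (Or.inl hp)]
  rw [Real.zero_rpow (by linarith), sub_zero]

lemma aux_pow_le (T t β p : ℝ) (htT : 0 < T - t) (hTT : T - t ≤ T) (hβp : β ≤ p) :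
    (T - t) ^ p ≤ (max 1 T) ^ (p - β) * (T - t) ^ β := by
  have h1 : (T - t) ^ p = (T - t) ^ (p - β) * (T - t) ^ β := by
    rw [← Real.rpow_add htT]; congr 1; ring
  rw [h1]
  have h2 : (T - t) ^ (p - β) ≤ (max 1 T) ^ (p - β) :=
    Real.rpow_le_rpow htT.le (le_trans hTT (le_max_right 1 T)) (by linarith)
  exact mul_le_mul_of_nonneg_right h2 (Real.rpow_nonneg htT.le β)

/-- Abstract bootstrap step of the energy-drain theorem: from
`E(t) ≤ C ∫_t^T f G + C ∫_t^T √G` with `f ∈ L^r`, `G(τ) ≤ C'(T−τ)^α`, `α > α₀ − δ`,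
one gets `E(t) ≤ C'' (T−t)^β` with `β = min(1 − 1/r + α₀ − δ, (α₀ − δ + 2)/2) > α₀`
provided `δ < min(1 − 1/r, 2 − α₀)`. -/
theorem bootstrap_step (T r α₀ α δ C C' : ℝ) (hT : 0 < T) (hr : 1 < r) (hα₀ : α₀ < 2)
    (hδ : 0 < δ) (hδsmall : δ < min (1 - 1 / r) (2 - α₀)) (hα : α₀ - δ < α)
    (hC : 0 ≤ C) (hC' : 0 ≤ C')
    (f G E : ℝ → ℝ) (hfmeas : Measurable f) (hf : ∀ t, 0 ≤ f t)
    (hfr : IntegrableOn (fun t => f t ^ r) (Ico 0 T))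
    (hG0 : ∀ τ, 0 ≤ G τ) (hG : ∀ τ ∈ Ico (0:ℝ) T, G τ ≤ C' * (T - τ) ^ α)
    (hGmeas : Measurable G)
    (hE0 : ∀ t, 0 ≤ E t) (hEbdd : ∃ B, ∀ t ∈ Ico (0:ℝ) T, E t ≤ B)
    (hE : ∀ t ∈ Ico (0:ℝ) T,
      E t ≤ C * (∫ τ in Ioo t T, f τ * G τ) + C * ∫ τ in Ioo t T, Real.sqrt (G τ)) :
    ∃ C'' > (0:ℝ),
      (∀ t ∈ Ico (0:ℝ) T,
        E t ≤ C'' * (T - t) ^ min (1 - 1 / r + α₀ - δ) ((α₀ - δ + 2) / 2)) ∧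
      α₀ < min (1 - 1 / r + α₀ - δ) ((α₀ - δ + 2) / 2) := by
  have hδ1 : δ < 1 - 1 / r := lt_of_lt_of_le hδsmall (min_le_left _ _)
  have hδ2 : δ < 2 - α₀ := lt_of_lt_of_le hδsmall (min_le_right _ _)
  set β₁ := 1 - 1 / r + α₀ - δ with hβ₁def
  set β₂ := (α₀ - δ + 2) / 2 with hβ₂def
  set β := min β₁ β₂ with hβdef
  clear_value β₁ β₂
  have hβle1 : β ≤ β₁ := by rw [hβdef]; exact min_le_left _ _
  have hβle2 : β ≤ β₂ := by rw [hβdef]; exact min_le_right _ _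
  have hβgt : α₀ < β := by rw [hβdef]; exact lt_min (by linarith) (by linarith)
  clear_value β
  obtain ⟨B, hB⟩ := hEbdd
  rcases le_or_gt β 0 with hβ0 | hβ0
  · -- trivial case : β ≤ 0, use boundedness
    have hM : (0:ℝ) < max B 1 := lt_of_lt_of_le one_pos (le_max_right B 1)
    refine ⟨(max B 1) * T ^ (-β), mul_pos hM (Real.rpow_pos_of_pos hT _), fun t ht => ?_, hβgt⟩
    have htT : 0 < T - t := by linarith [ht.2]
    have h1 : T ^ β ≤ (T - t) ^ β :=
      Real.rpow_le_rpow_of_nonpos htT (by linarith [ht.1]) hβ0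
    calc E t ≤ B := hB t ht
      _ ≤ max B 1 := le_max_left _ _
      _ = (max B 1) * T ^ (-β) * T ^ β := by
          rw [mul_assoc, ← Real.rpow_add hT, neg_add_cancel, Real.rpow_zero, mul_one]
      _ ≤ (max B 1) * T ^ (-β) * (T - t) ^ β :=
          mul_le_mul_of_nonneg_left h1
            (le_of_lt (mul_pos hM (Real.rpow_pos_of_pos hT _)))
  · -- main case : β > 0
    have hβ₁pos : 0 < β₁ := lt_of_lt_of_le hβ0 hβle1
    have hβ₂pos : 0 < β₂ := lt_of_lt_of_le hβ0 hβle2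
    set q := Real.conjExponent r with hqdef
    have hq : r.HolderConjugate q := Real.HolderConjugate.conjExponent hr
    clear_value q
    have hqpos : 0 < q := hq.symm.pos
    have hqne : q ≠ 0 := ne_of_gt hqpos
    have hrpos : (0:ℝ) < r := hq.pos
    have hq1 : 1 / q = 1 - 1 / r := by
      have h := hq.inv_add_inv_eq_one
      rw [one_div, one_div]; linarith
    have hαq : -1 < α * q := by
      have h : 1 / r - 1 < α := by linarith
      have h2 := mul_lt_mul_of_pos_right h hqpos
      have h3 : (1 / r - 1) * q = -1 := by
        have h4 : (1 / r - 1) = -(1 / q) := by linarith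
        rw [h4, neg_mul, one_div, inv_mul_cancel₀ hqne]
      linarith
    have hαhalf : -1 < α / 2 := by linarith
    have hc₂pos : 0 < α / 2 + 1 := by linarith
    have hfr_nonneg : ∀ x, 0 ≤ f x ^ r := fun x => Real.rpow_nonneg (hf x) r
    set K := (∫ τ in Ico (0:ℝ) T, f τ ^ r) ^ (1 / r) with hKdef
    have hKnonneg : 0 ≤ K :=
      Real.rpow_nonneg (setIntegral_nonneg measurableSet_Ico fun x _ => hfr_nonneg x) _
    set A := α * q + 1 with hAdef
    clear_value A
    have hApos : 0 < A := by linarith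
    set c₁ := (1 / A) ^ (1 / q) with hc₁def
    have hc₁ : 0 ≤ c₁ := Real.rpow_nonneg (by positivity) _
    set M₁ := (max 1 T) ^ (α + 1 / q - β) with hM₁def
    set M₂ := (max 1 T) ^ (α / 2 + 1 - β) with hM₂def
    have hM₁ : 0 ≤ M₁ := Real.rpow_nonneg (by positivity) _
    have hM₂ : 0 ≤ M₂ := Real.rpow_nonneg (by positivity) _
    clear_value K c₁ M₁ M₂
    have hCC1 : 0 ≤ C * (C' * (K * c₁)) :=
      mul_nonneg hC (mul_nonneg hC' (mul_nonneg hKnonneg hc₁))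
    have hCC2 : 0 ≤ C * Real.sqrt C' * (1 / (α / 2 + 1)) :=
      mul_nonneg (mul_nonneg hC (Real.sqrt_nonneg _)) (by positivity)
    have hC''pos : (0:ℝ) <
        C * (C' * (K * (c₁ * M₁))) + C * (Real.sqrt C' * (M₂ / (α / 2 + 1))) + 1 := by
      have h1 : 0 ≤ C * (C' * (K * (c₁ * M₁))) :=
        mul_nonneg hC (mul_nonneg hC' (mul_nonneg hKnonneg (mul_nonneg hc₁ hM₁)))
      have h2 : 0 ≤ C * (Real.sqrt C' * (M₂ / (α / 2 + 1))) :=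
        mul_nonneg hC (mul_nonneg (Real.sqrt_nonneg _) (div_nonneg hM₂ hc₂pos.le))
      linarith
    refine ⟨C * (C' * (K * (c₁ * M₁))) + C * (Real.sqrt C' * (M₂ / (α / 2 + 1))) + 1,
      hC''pos, fun t ht => ?_, hβgt⟩
    obtain ⟨ht0, htlt⟩ := ht
    have htT : 0 < T - t := by linarith
    have hsub : Ioo t T ⊆ Ico (0:ℝ) T := fun x hx => ⟨by linarith [hx.1], hx.2⟩
    set μ := volume.restrict (Ioo t T) with hμdef
    set g : ℝ → ℝ := fun τ => (T - τ) ^ α with hgdef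
    have hgmeas : Measurable g := (measurable_const.sub measurable_id).pow measurable_const
    have hgae : 0 ≤ᵐ[μ] g := by
      filter_upwards [ae_restrict_mem measurableSet_Ioo] with x hx
      exact Real.rpow_nonneg (by linarith [hx.2] : (0:ℝ) ≤ T - x) _
    -- integrability facts
    have hgq_int : IntegrableOn (fun τ : ℝ => (T - τ) ^ (α * q)) (Ioo t T) :=
      aux_integrableOn T t _ htlt hαq
    have hgq_val : ∫ τ in Ioo t T, (T - τ) ^ (α * q) = (T - t) ^ A / A := by
      rw [aux_integral T t _ htlt hαq, hAdef]
    have hf_int_r : IntegrableOn (fun x => f x ^ r) (Ioo t T) := hfr.mono_set hsub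
    have hr0 : ENNReal.ofReal r ≠ 0 := by
      simp [ENNReal.ofReal_eq_zero, not_le, hrpos]
    have hq0 : ENNReal.ofReal q ≠ 0 := by
      simp [ENNReal.ofReal_eq_zero, not_le, hqpos]
    have hfmem : MemLp f (ENNReal.ofReal r) μ := by
      refine (memLp_norm_rpow_iff hfmeas.aestronglyMeasurable hr0 ENNReal.ofReal_ne_top).mp ?_
      rw [ENNReal.div_self hr0 ENNReal.ofReal_ne_top, memLp_one_iff_integrable,
        ENNReal.toReal_ofReal hrpos.le]
      exact hf_int_r.congr (Filter.Eventually.of_forall fun x => by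
        show f x ^ r = ‖f x‖ ^ r
        rw [Real.norm_of_nonneg (hf x)])
    have hgmem : MemLp g (ENNReal.ofReal q) μ := by
      refine (memLp_norm_rpow_iff hgmeas.aestronglyMeasurable hq0 ENNReal.ofReal_ne_top).mp ?_
      rw [ENNReal.div_self hq0 ENNReal.ofReal_ne_top, memLp_one_iff_integrable,
        ENNReal.toReal_ofReal hqpos.le]
      apply hgq_int.congr
      filter_upwards [ae_restrict_mem measurableSet_Ioo] with x hx
      have hx0 : (0:ℝ) ≤ T - x := by linarith [hx.2]
      show (T - x) ^ (α * q) = ‖(T - x) ^ α‖ ^ q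
      rw [Real.norm_of_nonneg (Real.rpow_nonneg hx0 α), ← Real.rpow_mul hx0]
    -- Hölder
    have holder := integral_mul_le_Lp_mul_Lq_of_nonneg (μ := μ) hq
      (Filter.Eventually.of_forall hf) hgae hfmem hgmem
    have hgq_eq : ∫ a, g a ^ q ∂μ = (T - t) ^ A / A := by
      rw [← hgq_val]
      apply integral_congr_ae
      filter_upwards [ae_restrict_mem measurableSet_Ioo] with x hx
      have hx0 : (0:ℝ) ≤ T - x := by linarith [hx.2]
      show ((T - x) ^ α) ^ q = (T - x) ^ (α * q)
      rw [← Real.rpow_mul hx0]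
    have hfr_mono : ∫ a, f a ^ r ∂μ ≤ ∫ τ in Ico (0:ℝ) T, f τ ^ r :=
      setIntegral_mono_set hfr (Filter.Eventually.of_forall fun x => hfr_nonneg x)
        (HasSubset.Subset.eventuallyLE hsub)
    have hfr_rpow : (∫ a, f a ^ r ∂μ) ^ (1 / r) ≤ K := by
      rw [hKdef]
      exact Real.rpow_le_rpow (setIntegral_nonneg measurableSet_Ioo fun x _ => hfr_nonneg x)
        hfr_mono (by positivity)
    -- integrability of f*g and f*G
    have hone : (1 : ENNReal) / 1 = 1 / ENNReal.ofReal r + 1 / ENNReal.ofReal q := by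
      have h : r⁻¹ + q⁻¹ = 1 := hq.inv_add_inv_eq_one
      rw [div_one, one_div, one_div,
        ← ENNReal.ofReal_inv_of_pos hrpos, ← ENNReal.ofReal_inv_of_pos hqpos,
        ← ENNReal.ofReal_add (by positivity) (by positivity), show r⁻¹ + q⁻¹ = 1 from h,
        ENNReal.ofReal_one]
    have hfg_int : Integrable (fun x => f x * g x) μ := by
      have h := hgmem.smul hfmem (r := 1) (hpqr := ⟨by simpa [one_div] using hone.symm⟩)
      rw [memLp_one_iff_integrable] at h
      exact h.congr (Filter.Eventually.of_forall fun x => by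
        show (f • g) x = f x * g x
        simp [smul_eq_mul])
    have hfG_int : IntegrableOn (fun x => f x * G x) (Ioo t T) := by
      apply Integrable.mono' (hfg_int.const_mul C')
      · exact (hfmeas.mul hGmeas).aestronglyMeasurable
      · filter_upwards [ae_restrict_mem measurableSet_Ioo] with x hx
        rw [Real.norm_of_nonneg (mul_nonneg (hf x) (hG0 x))]
        calc f x * G x ≤ f x * (C' * g x) :=
              mul_le_mul_of_nonneg_left (hG x (hsub hx)) (hf x)
          _ = C' * (f x * g x) := by ring
    have hI₁ : ∫ a in Ioo t T, f a * G a ≤ C' * ∫ a, f a * g a ∂μ := by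
      rw [← integral_const_mul]
      refine setIntegral_mono_on hfG_int (hfg_int.const_mul C') measurableSet_Ioo
        fun x hx => ?_
      calc f x * G x ≤ f x * (C' * g x) :=
            mul_le_mul_of_nonneg_left (hG x (hsub hx)) (hf x)
        _ = C' * (f x * g x) := by ring
    have hgq_rpow : ((T - t) ^ A / A) ^ (1 / q) = (T - t) ^ (α + 1 / q) * c₁ := by
      rw [div_eq_mul_one_div, Real.mul_rpow (Real.rpow_nonneg htT.le _) (by positivity),
        ← Real.rpow_mul htT.le, hc₁def]
      congr 2
      rw [hAdef]
      field_simp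
    have hfg_val : ∫ a, f a * g a ∂μ ≤ K * ((T - t) ^ (α + 1 / q) * c₁) := by
      calc ∫ a, f a * g a ∂μ
          ≤ (∫ a, f a ^ r ∂μ) ^ (1 / r) * (∫ a, g a ^ q ∂μ) ^ (1 / q) := holder
        _ = (∫ a, f a ^ r ∂μ) ^ (1 / r) * ((T - t) ^ A / A) ^ (1 / q) := by rw [hgq_eq]
        _ ≤ K * ((T - t) ^ A / A) ^ (1 / q) :=
            mul_le_mul_of_nonneg_right hfr_rpow (Real.rpow_nonneg (by positivity) _)
        _ = K * ((T - t) ^ (α + 1 / q) * c₁) := by rw [hgq_rpow]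
    -- second integral
    have hhalf_int := aux_integrableOn T t (α / 2) htlt hαhalf
    have hptwise : ∀ x ∈ Ioo t T, Real.sqrt (G x) ≤ Real.sqrt C' * (T - x) ^ (α / 2) := by
      intro x hx
      have hx0 : (0:ℝ) ≤ T - x := by linarith [hx.2]
      calc Real.sqrt (G x) ≤ Real.sqrt (C' * (T - x) ^ α) :=
            Real.sqrt_le_sqrt (hG x (hsub hx))
        _ = Real.sqrt C' * Real.sqrt ((T - x) ^ α) := Real.sqrt_mul hC' _
        _ = Real.sqrt C' * (T - x) ^ (α / 2) := by
            simp only [Real.sqrt_eq_rpow]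
            rw [← Real.rpow_mul hx0, show α * (1 / 2) = α / 2 by ring]
    have hsqrtG_int : IntegrableOn (fun τ => Real.sqrt (G τ)) (Ioo t T) := by
      apply Integrable.mono' (hhalf_int.const_mul (Real.sqrt C'))
      · exact hGmeas.sqrt.aestronglyMeasurable
      · filter_upwards [ae_restrict_mem measurableSet_Ioo] with x hx
        rw [Real.norm_of_nonneg (Real.sqrt_nonneg _)]
        exact hptwise x hx
    have hI₂ : ∫ τ in Ioo t T, Real.sqrt (G τ)
        ≤ Real.sqrt C' * ((T - t) ^ (α / 2 + 1) / (α / 2 + 1)) := by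
      calc ∫ τ in Ioo t T, Real.sqrt (G τ)
          ≤ ∫ τ in Ioo t T, Real.sqrt C' * (T - τ) ^ (α / 2) :=
            setIntegral_mono_on hsqrtG_int (hhalf_int.const_mul _) measurableSet_Ioo hptwise
        _ = Real.sqrt C' * ∫ τ in Ioo t T, (T - τ) ^ (α / 2) := integral_const_mul _ _
        _ = Real.sqrt C' * ((T - t) ^ (α / 2 + 1) / (α / 2 + 1)) := by
            rw [aux_integral T t _ htlt hαhalf]
    -- exponent downgrades
    have hTle : T - t ≤ T := by linarith
    have he₁ : β ≤ α + 1 / q := by linarith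
    have he₂ : β ≤ α / 2 + 1 := by linarith
    have hp₁ : (T - t) ^ (α + 1 / q) ≤ M₁ * (T - t) ^ β := by
      rw [hM₁def]; exact aux_pow_le T t β _ htT hTle he₁
    have hp₂ : (T - t) ^ (α / 2 + 1) ≤ M₂ * (T - t) ^ β := by
      rw [hM₂def]; exact aux_pow_le T t β _ htT hTle he₂
    have hβnn : 0 ≤ (T - t) ^ β := Real.rpow_nonneg htT.le _
    -- assemble
    have hfinal1 : C * (∫ τ in Ioo t T, f τ * G τ)
        ≤ C * (C' * (K * (c₁ * M₁))) * (T - t) ^ β := by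
      have h1 : ∫ τ in Ioo t T, f τ * G τ ≤ C' * (K * ((T - t) ^ (α + 1 / q) * c₁)) :=
        le_trans hI₁ (mul_le_mul_of_nonneg_left hfg_val hC')
      calc C * (∫ τ in Ioo t T, f τ * G τ)
          ≤ C * (C' * (K * ((T - t) ^ (α + 1 / q) * c₁))) :=
            mul_le_mul_of_nonneg_left h1 hC
        _ = (C * (C' * (K * c₁))) * (T - t) ^ (α + 1 / q) := by ring
        _ ≤ (C * (C' * (K * c₁))) * (M₁ * (T - t) ^ β) :=
            mul_le_mul_of_nonneg_left hp₁ hCC1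
        _ = C * (C' * (K * (c₁ * M₁))) * (T - t) ^ β := by ring
    have hfinal2 : C * (∫ τ in Ioo t T, Real.sqrt (G τ))
        ≤ C * (Real.sqrt C' * (M₂ / (α / 2 + 1))) * (T - t) ^ β := by
      calc C * (∫ τ in Ioo t T, Real.sqrt (G τ))
          ≤ C * (Real.sqrt C' * ((T - t) ^ (α / 2 + 1) / (α / 2 + 1))) :=
            mul_le_mul_of_nonneg_left hI₂ hC
        _ = (C * Real.sqrt C' * (1 / (α / 2 + 1))) * (T - t) ^ (α / 2 + 1) := by ring
        _ ≤ (C * Real.sqrt C' * (1 / (α / 2 + 1))) * (M₂ * (T - t) ^ β) :=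
            mul_le_mul_of_nonneg_left hp₂ hCC2
        _ = C * (Real.sqrt C' * (M₂ / (α / 2 + 1))) * (T - t) ^ β := by ring
    calc E t ≤ C * (∫ τ in Ioo t T, f τ * G τ) + C * ∫ τ in Ioo t T, Real.sqrt (G τ) :=
          hE t ⟨ht0, htlt⟩
      _ ≤ C * (C' * (K * (c₁ * M₁))) * (T - t) ^ β
          + C * (Real.sqrt C' * (M₂ / (α / 2 + 1))) * (T - t) ^ β :=
          add_le_add hfinal1 hfinal2
      _ = (C * (C' * (K * (c₁ * M₁))) + C * (Real.sqrt C' * (M₂ / (α / 2 + 1))))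
            * (T - t) ^ β := by ring
      _ ≤ (C * (C' * (K * (c₁ * M₁))) + C * (Real.sqrt C' * (M₂ / (α / 2 + 1))) + 1)
            * (T - t) ^ β :=
          mul_le_mul_of_nonneg_right (by linarith) hβnn
end
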